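/- Let X₁,…,Xₙ be ℕ-valued random variables on a probability space with S = X₁+⋯+Xₙ and S₋₁ = X₂+⋯+Xₙ. Suppose X₁ follows a Katz distribution with parameters a and b, where |a| < 1 and b > 0, and that X₁ is independent of S₋₁. Then for every integer k ≥ 1, (a − 1) · E[X₁ · 1_{\{S≤k\}}] = a · E[X₁ · 1_{\{S=k\}}] − (a+b) · P(S ≤ k−1). -/

import Mathlib

open MeasureTheory ProbabilityTheory

/-- If `X₁` follows a Katz distribution with parameters `|a| < 1`, `b > 0`
and is independent of `S₋₁`, then for every `k ≥ 1`,
`(a - 1) E[X₁ · 1_{S≤k}] = a E[X₁ · 1_{S=k}] - (a+b) P(S ≤ k-1)`. -/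
theorem allocation_vs_cumulative_allocation_katz
    {Ω : Type*} [MeasurableSpace Ω] (μ : Measure Ω) [IsProbabilityMeasure μ]
    (n : ℕ) (X : Fin (n + 1) → Ω → ℕ) (hX : ∀ i, Measurable (X i))
    (S Sm : Ω → ℕ)
    (hS : ∀ ω, S ω = ∑ i, X i ω)
    (hSm : ∀ ω, Sm ω = ∑ i : Fin n, X i.succ ω)
    (a b : ℝ) (ha : |a| < 1) (hb : 0 < b)
    (hkatz : ∀ k : ℕ, (μ {ω | X 0 ω = k + 1}).toReal
      = (a + b / (k + 1)) * (μ {ω | X 0 ω = k}).toReal)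
    (hindep : IndepFun (X 0) Sm μ) :
    ∀ k : ℕ, 1 ≤ k →
      (a - 1) * ∫ ω in {ω | S ω ≤ k}, (X 0 ω : ℝ) ∂μ
        = a * (∫ ω in {ω | S ω = k}, (X 0 ω : ℝ) ∂μ)
          - (a + b) * (μ {ω | S ω ≤ k - 1}).toReal := by
  have hX0 : Measurable (X 0) := hX 0
  have hT : Measurable Sm := by
    have hfun : Sm = fun ω => ∑ i : Fin n, X i.succ ω := funext hSm
    rw [hfun]
    exact Finset.measurable_sum _ (fun i _ => hX i.succ)
  have hST : ∀ ω, S ω = X 0 ω + Sm ω := by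
    intro ω; rw [hS, hSm, Fin.sum_univ_succ]
  set f : ℕ → ℝ := fun j => (μ (X 0 ⁻¹' {j})).toReal with hf
  set g : ℕ → ℝ := fun m => (μ (Sm ⁻¹' {m})).toReal with hg
  set G : ℕ → ℝ := fun m => (μ (Sm ⁻¹' Set.Iic m)).toReal with hG
  -- independence as a product formula
  have hmul : ∀ (s t : Set ℕ), μ (X 0 ⁻¹' s ∩ Sm ⁻¹' t)
      = μ (X 0 ⁻¹' s) * μ (Sm ⁻¹' t) := by
    intro s t
    exact hindep.measure_inter_preimage_eq_mul s t (MeasurableSet.of_discrete)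
      (MeasurableSet.of_discrete)
  -- generic disjointness of the pieces
  have hdisj : ∀ (B : ℕ → Set ℕ) (K : ℕ),
      Set.Pairwise (↑(Finset.range (K+1)))
        (Function.onFun Disjoint fun j => X 0 ⁻¹' {j} ∩ Sm ⁻¹' (B j)) := by
    intro B K i _ j _ hij
    refine Set.disjoint_left.2 fun ω h1 h2 => ?_
    exact hij (h1.1.symm.trans h2.1)
  have hmeaspiece : ∀ (B : ℕ → Set ℕ) (j : ℕ),
      MeasurableSet (X 0 ⁻¹' {j} ∩ Sm ⁻¹' (B j)) := by
    intro B j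
    exact (hX0 (MeasurableSet.singleton j)).inter (hT MeasurableSet.of_discrete)
  -- generic integral formula
  have key : ∀ (K : ℕ) (B : ℕ → Set ℕ),
      (∫ ω in ⋃ j ∈ Finset.range (K+1), (X 0 ⁻¹' {j} ∩ Sm ⁻¹' (B j)), (X 0 ω : ℝ) ∂μ)
        = ∑ j ∈ Finset.range (K+1), (j : ℝ) * f j * (μ (Sm ⁻¹' (B j))).toReal := by
    intro K B
    have hEq : ∀ j : ℕ, Set.EqOn (fun ω => (X 0 ω : ℝ)) (fun _ => (j : ℝ))
        (X 0 ⁻¹' {j} ∩ Sm ⁻¹' (B j)) := by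
      intro j ω hω
      have : X 0 ω = j := hω.1
      simp [this]
    rw [integral_biUnion_finset _ (fun j _ => hmeaspiece B j) (hdisj B K)]
    · refine Finset.sum_congr rfl fun j _ => ?_
      rw [setIntegral_congr_fun (hmeaspiece B j) (hEq j), setIntegral_const,
        smul_eq_mul]
      rw [measureReal_def, hmul {j} (B j), ENNReal.toReal_mul]
      simp only [hf]
      ring
    · intro j _
      exact (integrableOn_const (measure_ne_top μ _)).congr_fun
        (hEq j).symm (hmeaspiece B j)
  -- generic measure formula
  have keyμ : ∀ (K : ℕ) (B : ℕ → Set ℕ),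
      (μ (⋃ j ∈ Finset.range (K+1), (X 0 ⁻¹' {j} ∩ Sm ⁻¹' (B j)))).toReal
        = ∑ j ∈ Finset.range (K+1), f j * (μ (Sm ⁻¹' (B j))).toReal := by
    intro K B
    rw [measure_biUnion_finset (hdisj B K) (fun j _ => hmeaspiece B j),
      ENNReal.toReal_sum (fun j _ => measure_ne_top μ _)]
    refine Finset.sum_congr rfl fun j _ => ?_
    rw [hmul {j} (B j), ENNReal.toReal_mul]
  -- set decompositions
  have hsetle : ∀ K : ℕ, {ω | S ω ≤ K}
      = ⋃ j ∈ Finset.range (K+1), (X 0 ⁻¹' {j} ∩ Sm ⁻¹' Set.Iic (K - j)) := by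
    intro K; ext ω
    simp only [Set.mem_setOf_eq, Set.mem_iUnion, Set.mem_inter_iff, Set.mem_preimage,
      Set.mem_singleton_iff, Set.mem_Iic, Finset.mem_range, hST ω, exists_prop]
    constructor
    · intro h; exact ⟨X 0 ω, by omega, rfl, by omega⟩
    · rintro ⟨j, hj, h1, h2⟩; omega
  have hseteq : ∀ K : ℕ, {ω | S ω = K}
      = ⋃ j ∈ Finset.range (K+1), (X 0 ⁻¹' {j} ∩ Sm ⁻¹' {K - j}) := by
    intro K; ext ω
    simp only [Set.mem_setOf_eq, Set.mem_iUnion, Set.mem_inter_iff, Set.mem_preimage,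
      Set.mem_singleton_iff, Finset.mem_range, hST ω, exists_prop]
    constructor
    · intro h; exact ⟨X 0 ω, by omega, rfl, by omega⟩
    · rintro ⟨j, hj, h1, h2⟩; omega
  -- the Katz recursion for f
  have hkatz' : ∀ j : ℕ, ((j : ℝ) + 1) * f (j + 1) = (a * (j + 1) + b) * f j := by
    intro j
    have h1 : f (j + 1) = (a + b / (j + 1)) * f j := by
      have := hkatz j
      simp only [hf]
      convert this using 3 <;> rfl
    rw [h1]
    have hj : ((j : ℝ) + 1) ≠ 0 := by positivity
    have h2 : ((j : ℝ) + 1) * (a + b / ((j : ℝ) + 1)) = a * ((j : ℝ) + 1) + b := by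
      field_simp
    linear_combination G 0 * 0 + (f j) * h2
  -- recursion for G
  have hGrec : ∀ t : ℕ, G (t + 1) = G t + g (t + 1) := by
    intro t
    have hset : Sm ⁻¹' Set.Iic (t + 1) = Sm ⁻¹' Set.Iic t ∪ Sm ⁻¹' {t + 1} := by
      ext ω
      simp only [Set.mem_preimage, Set.mem_Iic, Set.mem_union, Set.mem_singleton_iff]
      omega
    have hd : Disjoint (Sm ⁻¹' Set.Iic t) (Sm ⁻¹' {t + 1}) := by
      refine Set.disjoint_left.2 fun ω h1 h2 => ?_
      have h1' : Sm ω ≤ t := h1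
      have h2' : Sm ω = t + 1 := h2
      omega
    simp only [hG, hg, hset]
    rw [measure_union hd (hT (MeasurableSet.singleton _)),
      ENNReal.toReal_add (measure_ne_top μ _) (measure_ne_top μ _)]
  have hG0 : G 0 = g 0 := by
    have : Set.Iic (0 : ℕ) = {0} := by ext x; simp [Nat.le_zero]
    simp only [hG, hg, this]
  -- main proof
  intro k hk
  obtain ⟨m, rfl⟩ : ∃ m, k = m + 1 := ⟨k - 1, by omega⟩
  -- the three quantities as sums
  have hI1 : (∫ ω in {ω | S ω ≤ m + 1}, (X 0 ω : ℝ) ∂μ)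
      = ∑ j ∈ Finset.range (m + 2), (j : ℝ) * f j * G (m + 1 - j) := by
    rw [hsetle (m + 1)]
    exact key (m + 1) (fun j => Set.Iic (m + 1 - j))
  have hI2 : (∫ ω in {ω | S ω = m + 1}, (X 0 ω : ℝ) ∂μ)
      = ∑ j ∈ Finset.range (m + 2), (j : ℝ) * f j * g (m + 1 - j) := by
    rw [hseteq (m + 1)]
    exact key (m + 1) (fun j => {m + 1 - j})
  have hI3 : (μ {ω | S ω ≤ m + 1 - 1}).toReal
      = ∑ j ∈ Finset.range (m + 1), f j * G (m - j) := by
    have : m + 1 - 1 = m := rfl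
    rw [this, hsetle m]
    exact keyμ m (fun j => Set.Iic (m - j))
  -- step A : recursion
  have stepA : ∑ j ∈ Finset.range (m + 2), (j : ℝ) * f j * G (m + 1 - j)
      = a * (∑ j ∈ Finset.range (m + 1), (j : ℝ) * f j * G (m - j))
        + (a + b) * ∑ j ∈ Finset.range (m + 1), f j * G (m - j) := by
    rw [Finset.sum_range_succ' (fun j => (j : ℝ) * f j * G (m + 1 - j)) (m + 1)]
    simp only [Nat.cast_zero, zero_mul, add_zero, Nat.succ_sub_succ]
    rw [Finset.mul_sum, Finset.mul_sum, ← Finset.sum_add_distrib]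
    refine Finset.sum_congr rfl fun j _ => ?_
    have h := hkatz' j
    have hcast : ((j : ℝ) + 1) = ((j + 1 : ℕ) : ℝ) := by push_cast; ring
    calc ((j + 1 : ℕ) : ℝ) * f (j + 1) * G (m - j)
        = (((j : ℝ) + 1) * f (j + 1)) * G (m - j) := by rw [hcast]
      _ = ((a * (j + 1) + b) * f j) * G (m - j) := by rw [h]
      _ = a * ((j : ℝ) * f j * G (m - j)) + (a + b) * (f j * G (m - j)) := by ring
  -- step B : splitting off the diagonal
  have stepB : ∑ j ∈ Finset.range (m + 2), (j : ℝ) * f j * G (m + 1 - j)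
      = (∑ j ∈ Finset.range (m + 1), (j : ℝ) * f j * G (m - j))
        + ∑ j ∈ Finset.range (m + 2), (j : ℝ) * f j * g (m + 1 - j) := by
    rw [Finset.sum_range_succ (fun j => (j : ℝ) * f j * G (m + 1 - j)) (m + 1),
      Finset.sum_range_succ (fun j => (j : ℝ) * f j * g (m + 1 - j)) (m + 1)]
    have hlast : (m + 1 : ℕ) - (m + 1) = 0 := by omega
    rw [hlast, hG0]
    have hsum : ∑ j ∈ Finset.range (m + 1), (j : ℝ) * f j * G (m + 1 - j)
        = ∑ j ∈ Finset.range (m + 1),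
            ((j : ℝ) * f j * G (m - j) + (j : ℝ) * f j * g (m + 1 - j)) := by
      refine Finset.sum_congr rfl fun j hj => ?_
      have hj' : j ≤ m := by
        have := Finset.mem_range.mp hj; omega
      have h1 : m + 1 - j = (m - j) + 1 := by omega
      rw [h1, hGrec (m - j)]
      ring
    rw [hsum, Finset.sum_add_distrib]
    ring
  rw [hI1, hI2, hI3]
  linear_combination (-1 : ℝ) * stepA + a * stepB
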